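/- Let k be a field of characteristic zero and let L be a Lie algebra over k admitting a basis {e, f, g} (so L is three-dimensional) with ⁅g, e⁆ = e, ⁅g, f⁆ = −f and ⁅e, f⁆ = 0. Then L is not presentable by a product. -/

import Mathlib

/-- A Lie algebra `L` over `k` is presentable by a product if there exist two nonzero
Lie subalgebras `g₁`, `g₂` of `L` which commute elementwise and with `g₁ + g₂ = L`. -/
def LiePresentableByProduct (k L : Type*) [CommRing k] [LieRing L] [LieAlgebra k L] : Prop :=
  ∃ g₁ g₂ : LieSubalgebra k L, g₁ ≠ ⊥ ∧ g₂ ≠ ⊥ ∧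
    (∀ x ∈ g₁, ∀ y ∈ g₂, ⁅x, y⁆ = 0) ∧
    (g₁ : Submodule k L) ⊔ (g₂ : Submodule k L) = ⊤

/-- the three-dimensional Lie algebra `sol` with basis `{e, f, g}`,
`⁅g, e⁆ = e`, `⁅g, f⁆ = -f`, `⁅e, f⁆ = 0`, is not presentable by a product. -/
theorem stmt_9 (k L : Type*) [Field k] [CharZero k] [LieRing L] [LieAlgebra k L]
    (b : Module.Basis (Fin 3) k L)
    (hge : ⁅b 2, b 0⁆ = b 0) (hgf : ⁅b 2, b 1⁆ = -b 1) (hef : ⁅b 0, b 1⁆ = 0) :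
    ¬ LiePresentableByProduct k L := by
  rintro ⟨g₁, g₂, h₁, h₂, hcomm, hsup⟩
  -- every x decomposes
  have hb : ∀ x : L, x = b.repr x 0 • b 0 + b.repr x 1 • b 1 + b.repr x 2 • b 2 := by
    intro x
    have := b.sum_repr x
    rw [Fin.sum_univ_three] at this
    exact this.symm
  -- center is trivial
  have hcen : ∀ x : L, ⁅b 0, x⁆ = 0 → ⁅b 1, x⁆ = 0 → ⁅b 2, x⁆ = 0 → x = 0 := by
    intro x hx0 hx1 hx2
    set α := b.repr x 0 with hα
    set β := b.repr x 1 with hβ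
    set γ := b.repr x 2 with hγ
    rw [hb x, lie_add, lie_add, lie_smul, lie_smul, lie_smul, hge, hgf,
      lie_self, smul_zero, add_zero, smul_neg] at hx2
    have e01 : α • b 0 + (-β) • b 1 + (0:k) • b 2 = 0 := by
      rw [neg_smul, zero_smul, add_zero]; exact hx2
    have hli := Fintype.linearIndependent_iff.mp b.linearIndependent ![α, -β, 0]
    rw [Fin.sum_univ_three] at hli
    have hli := hli (by simpa using e01)
    have hA : α = 0 := by simpa using hli 0
    have hB : β = 0 := by have := hli 1; simp at this; simpa using this
    rw [hb x, ← hα, ← hβ, ← hγ, hA, hB, zero_smul, zero_smul, zero_add, zero_add,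
      lie_smul] at hx0
    have hge' : ⁅b 0, b 2⁆ = -b 0 := by rw [← lie_skew, hge]
    rw [hge', smul_neg, neg_eq_zero] at hx0
    have hC : γ = 0 := by
      by_contra hne
      exact b.ne_zero 0 (by simpa [hne] using smul_eq_zero.mp hx0)
    rw [hb x, ← hα, ← hβ, ← hγ, hA, hB, hC]
    simp
  -- anything commuting with both g₁ and g₂ is zero
  have hkey : ∀ x : L, (∀ y ∈ (g₁ : Submodule k L), ⁅y, x⁆ = 0) →
      (∀ y ∈ (g₂ : Submodule k L), ⁅y, x⁆ = 0) → x = 0 := by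
    intro x hx1 hx2
    have hall : ∀ y : L, ⁅y, x⁆ = 0 := by
      intro y
      have hy : y ∈ (g₁ : Submodule k L) ⊔ (g₂ : Submodule k L) := by
        rw [hsup]; trivial
      rcases Submodule.mem_sup.mp hy with ⟨y1, hy1, y2, hy2, rfl⟩
      rw [add_lie, hx1 _ hy1, hx2 _ hy2, add_zero]
    exact hcen x (hall _) (hall _) (hall _)
  -- intersection is trivial
  have hinf : (g₁ : Submodule k L) ⊓ (g₂ : Submodule k L) = ⊥ := by
    rw [eq_bot_iff]
    rintro x ⟨hx1, hx2⟩
    have : x = 0 := by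
      apply hkey
      · intro y hy; exact hcomm y hy x hx2
      · intro y hy
        rw [← lie_skew, hcomm x hx1 y hy, neg_zero]
    simpa using this
  haveI : Module.Finite k L := Module.Finite.of_basis b
  have hrank : Module.finrank k L = 3 := by
    rw [Module.finrank_eq_card_basis b, Fintype.card_fin]
  have hd := Submodule.finrank_sup_add_finrank_inf_eq (g₁ : Submodule k L) (g₂ : Submodule k L)
  rw [hsup, hinf, finrank_top, finrank_bot, hrank, add_zero] at hd
  have hbotiff : ∀ A : LieSubalgebra k L,
      Module.finrank k (A : Submodule k L) = 0 → A = ⊥ := by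
    intro A hA
    have : (A : Submodule k L) = ⊥ := Submodule.finrank_eq_zero.mp hA
    ext x
    simp [← LieSubalgebra.mem_toSubmodule, this]
  have hp1 : 0 < Module.finrank k (g₁ : Submodule k L) :=
    Nat.pos_of_ne_zero fun h => h₁ (hbotiff _ h)
  have hp2 : 0 < Module.finrank k (g₂ : Submodule k L) :=
    Nat.pos_of_ne_zero fun h => h₂ (hbotiff _ h)
  -- main: a one-dimensional factor gives a contradiction
  have main : ∀ A B : LieSubalgebra k L, (∀ x ∈ A, ∀ y ∈ B, ⁅x, y⁆ = 0) →
      (A : Submodule k L) ⊔ (B : Submodule k L) = ⊤ →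
      Module.finrank k (A : Submodule k L) = 1 → False := by
    intro A B hAB hABsup hA1
    obtain ⟨v, hv0, hvspan⟩ := finrank_eq_one_iff'.mp hA1
    have hall : ∀ y : L, ⁅y, v.1⁆ = 0 := by
      intro y
      have hy : y ∈ (A : Submodule k L) ⊔ (B : Submodule k L) := by
        rw [hABsup]; trivial
      rcases Submodule.mem_sup.mp hy with ⟨y1, hy1, y2, hy2, rfl⟩
      have hy1' : ⁅y1, v.1⁆ = 0 := by
        obtain ⟨c, hc⟩ := hvspan ⟨y1, hy1⟩
        have : y1 = c • v.1 := by
          have := congrArg Subtype.val hc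
          simpa using this.symm
        rw [this, smul_lie, lie_self, smul_zero]
      have hy2' : ⁅y2, v.1⁆ = 0 := by
        rw [← lie_skew, hAB v.1 v.2 y2 hy2, neg_zero]
      rw [add_lie, hy1', hy2', add_zero]
    exact hv0 (Subtype.ext (hcen v.1 (hall _) (hall _) (hall _)))
  have : Module.finrank k (g₁ : Submodule k L) = 1 ∨
      Module.finrank k (g₂ : Submodule k L) = 1 := by omega
  rcases this with h | h
  · exact main g₁ g₂ hcomm hsup h
  · refine main g₂ g₁ (fun x hx y hy => ?_) (by rw [sup_comm]; exact hsup) h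
    rw [← lie_skew, hcomm y hy x hx, neg_zero]
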